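/- Let Δ be a pure 1-dimensional simplicial complex (i.e., a graph, every maximal face an edge). Then Δ is vertex decomposable if and only if Δ is connected. -/

import Mathlib

/-- An abstract simplicial complex on vertex type `V` (faces closed under subsets). -/
structure SC (V : Type) where
  faces : Set (Finset V)
  down_closed : ∀ ⦃s t : Finset V⦄, s ∈ faces → t ⊆ s → t ∈ faces

variable {V : Type} [DecidableEq V]

/-- The deletion of a vertex. -/
def SC.del (Δ : SC V) (x : V) : SC V where
  faces := {F | x ∉ F ∧ F ∈ Δ.faces}
  down_closed := fun s t hs hts =>
    ⟨fun h => hs.1 (hts h), Δ.down_closed hs.2 hts⟩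

/-- The link of a vertex. -/
def SC.link (Δ : SC V) (x : V) : SC V where
  faces := {F | x ∉ F ∧ insert x F ∈ Δ.faces}
  down_closed := fun s t hs hts =>
    ⟨fun h => hs.1 (hts h), Δ.down_closed hs.2 (Finset.insert_subset_insert x hts)⟩

/-- A facet: a maximal face. -/
def SC.facet (Δ : SC V) (F : Finset V) : Prop :=
  F ∈ Δ.faces ∧ ∀ G ∈ Δ.faces, F ⊆ G → F = G

/-- The 1-skeleton graph of a simplicial complex, on its vertex set. -/
def SC.skeleton (Δ : SC V) : SimpleGraph {v : V // ({v} : Finset V) ∈ Δ.faces} :=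
  SimpleGraph.fromRel (fun u v => ({u.1, v.1} : Finset V) ∈ Δ.faces)

/-- Connectivity of a simplicial complex (connectivity of its 1-skeleton). -/
def SC.Conn (Δ : SC V) : Prop := Δ.skeleton.Connected

/-- Vertex decomposability. -/
inductive VD : SC V → Prop
  | point (Δ : SC V) : Δ.faces = {∅} → VD Δ
  | simplex (Δ : SC V) (F : Finset V) : Δ.faces = {s : Finset V | s ⊆ F} → VD Δ
  | shed (Δ : SC V) (x : V) : ({x} : Finset V) ∈ Δ.faces →
      VD (Δ.link x) → VD (Δ.del x) →
      (∀ F : Finset V, (Δ.del x).facet F → Δ.facet F) → VD Δ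

section Aux

open Finset SimpleGraph

variable {W : Type} [Fintype W] [DecidableEq W]

/-- Every face of a finite complex is contained in a facet. -/
lemma SC.exists_facet_supset (Δ : SC W) {F : Finset W} (hF : F ∈ Δ.faces) :
    ∃ G, Δ.facet G ∧ F ⊆ G := by
  classical
  have hfin : {G : Finset W | G ∈ Δ.faces ∧ F ⊆ G}.Finite := Set.toFinite _
  obtain ⟨G, hG, hmax⟩ := hfin.exists_maximalFor Finset.card _ ⟨F, hF, subset_rfl⟩
  refine ⟨G, ⟨hG.1, fun H hH hGH => ?_⟩, hG.2⟩
  have hH' : H ∈ {G : Finset W | G ∈ Δ.faces ∧ F ⊆ G} := ⟨hH, hG.2.trans hGH⟩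
  exact Finset.eq_of_subset_of_card_le hGH (hmax hH' (Finset.card_le_card hGH))

lemma SC.card_le_two (Δ : SC W) (hpure : ∀ F : Finset W, Δ.facet F → F.card = 2)
    {F : Finset W} (hF : F ∈ Δ.faces) : F.card ≤ 2 := by
  obtain ⟨G, hG, hFG⟩ := Δ.exists_facet_supset hF
  calc F.card ≤ G.card := Finset.card_le_card hFG
    _ = 2 := hpure G hG

lemma SC.facet_of_card_two (Δ : SC W) (h2 : ∀ F ∈ Δ.faces, F.card ≤ 2)
    {F : Finset W} (hF : F ∈ Δ.faces) (hc : F.card = 2) : Δ.facet F :=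
  ⟨hF, fun G hG hsub => Finset.eq_of_subset_of_card_le hsub ((h2 G hG).trans hc.ge)⟩

/-- Every vertex has a neighbor. -/
lemma SC.exists_nbr (Δ : SC W) (hpure : ∀ F : Finset W, Δ.facet F → F.card = 2)
    {v : W} (hv : ({v} : Finset W) ∈ Δ.faces) :
    ∃ u, u ≠ v ∧ ({v, u} : Finset W) ∈ Δ.faces := by
  obtain ⟨G, hG, hvG⟩ := Δ.exists_facet_supset hv
  obtain ⟨a, b, hab, rfl⟩ := Finset.card_eq_two.mp (hpure G hG)
  have hv' : v ∈ ({a, b} : Finset W) := hvG (Finset.mem_singleton_self v)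
  rcases Finset.mem_insert.mp hv' with rfl | hv'
  · exact ⟨b, hab.symm, hG.1⟩
  · rw [Finset.mem_singleton] at hv'
    subst hv'
    exact ⟨a, hab, by rw [Finset.pair_comm]; exact hG.1⟩

/-- The vertex set as a Finset. -/
noncomputable def SC.vfin (Δ : SC W) : Finset W :=
  (Set.toFinite {v : W | ({v} : Finset W) ∈ Δ.faces}).toFinset

lemma SC.mem_vfin (Δ : SC W) {v : W} : v ∈ Δ.vfin ↔ ({v} : Finset W) ∈ Δ.faces := by
  simp [SC.vfin, Set.Finite.mem_toFinset]

/-- A nonempty zero-dimensional complex is vertex decomposable. -/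
lemma SC.vd_of_zero_dim : ∀ n (Δ : SC W), Δ.vfin.card = n →
    (∀ F ∈ Δ.faces, F.card ≤ 1) → Δ.faces.Nonempty → VD Δ := by
  intro n
  induction n using Nat.strong_induction_on with
  | _ n ih =>
    intro Δ hn h1 hne
    have h0 : (∅ : Finset W) ∈ Δ.faces := Δ.down_closed hne.choose_spec (Finset.empty_subset _)
    by_cases hv : ∃ v, ({v} : Finset W) ∈ Δ.faces
    · obtain ⟨v, hv⟩ := hv
      by_cases hw : ∃ w, w ≠ v ∧ ({w} : Finset W) ∈ Δ.faces
      · obtain ⟨w, hwv, hw⟩ := hw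
        refine VD.shed Δ v hv ?_ ?_ ?_
        · -- link is a point
          refine VD.point _ ?_
          ext F
          simp only [Set.mem_singleton_iff, SC.link, Set.mem_setOf_eq]
          constructor
          · rintro ⟨hvF, hF⟩
            have := h1 _ hF
            rw [Finset.card_insert_of_notMem hvF] at this
            exact Finset.card_eq_zero.mp (by omega)
          · rintro rfl
            exact ⟨Finset.notMem_empty v, by simpa using hv⟩
        · -- deletion by induction
          have hvd : (Δ.del v).vfin = Δ.vfin.erase v := by
            ext u
            simp only [SC.mem_vfin, Finset.mem_erase, SC.del, Set.mem_setOf_eq,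
              Finset.mem_singleton]
            tauto
          have hvmem : v ∈ Δ.vfin := Δ.mem_vfin.mpr hv
          have hlt : (Δ.del v).vfin.card < n := by
            rw [hvd, Finset.card_erase_of_mem hvmem]
            have : 0 < Δ.vfin.card := Finset.card_pos.mpr ⟨v, hvmem⟩
            omega
          exact ih _ hlt _ rfl (fun F hF => h1 F hF.2)
            ⟨∅, Finset.notMem_empty v, h0⟩
        · -- facets of deletion are facets
          rintro F ⟨⟨hvF, hF⟩, hmax⟩
          have hFc := h1 F hF
          interval_cases hc : F.card
          · exfalso
            have hwdel : ({w} : Finset W) ∈ (Δ.del v).faces :=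
              ⟨by simpa using hwv.symm, hw⟩
            have := hmax {w} hwdel (by simp [Finset.card_eq_zero.mp hc])
            simp [Finset.card_eq_zero.mp hc] at this
          · obtain ⟨u, rfl⟩ := Finset.card_eq_one.mp hc
            exact ⟨hF, fun G hG hsub =>
              Finset.eq_of_subset_of_card_le hsub ((h1 G hG).trans (by simp))⟩
      · -- exactly one vertex: simplex on {v}
        refine VD.simplex Δ {v} ?_
        ext F
        simp only [Set.mem_setOf_eq]
        constructor
        · intro hF
          intro u hu
          have hu' : ({u} : Finset W) ∈ Δ.faces :=
            Δ.down_closed hF (Finset.singleton_subset_iff.mpr hu)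
          have : u = v := by
            by_contra h
            exact hw ⟨u, h, hu'⟩
          simp [this]
        · intro hF
          rcases Finset.subset_singleton_iff.mp hF with rfl | rfl
          · exact h0
          · exact hv
    · -- no vertices: point
      refine VD.point Δ ?_
      ext F
      simp only [Set.mem_singleton_iff]
      constructor
      · intro hF
        have := h1 F hF
        interval_cases hc : F.card
        · exact Finset.card_eq_zero.mp hc
        · obtain ⟨u, rfl⟩ := Finset.card_eq_one.mp hc
          exact (hv ⟨u, hF⟩).elim
      · rintro rfl; exact h0

lemma SC.skeleton_adj (Δ : SC W) {u v : {v : W // ({v} : Finset W) ∈ Δ.faces}} :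
    Δ.skeleton.Adj u v ↔ u ≠ v ∧ ({u.1, v.1} : Finset W) ∈ Δ.faces := by
  unfold SC.skeleton
  rw [SimpleGraph.fromRel_adj]
  constructor
  · rintro ⟨hne, h | h⟩
    · exact ⟨hne, h⟩
    · exact ⟨hne, by rwa [Finset.pair_comm]⟩
  · rintro ⟨hne, h⟩
    exact ⟨hne, Or.inl h⟩

/-- The inclusion of the deletion's skeleton into the skeleton. -/
def SC.delHom (Δ : SC W) (x : W) : (Δ.del x).skeleton →g Δ.skeleton where
  toFun v := ⟨v.1, v.2.2⟩
  map_rel' := by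
    intro a b h
    rw [SC.skeleton_adj] at h ⊢
    exact ⟨fun he => h.1 (Subtype.ext (Subtype.mk_eq_mk.mp he)), h.2.2⟩

/-- Walks in the skeleton avoiding `x` give reachability in the deletion's skeleton. -/
lemma SC.reach_del (Δ : SC W) (x : W) :
    ∀ {a b : {v : W // ({v} : Finset W) ∈ Δ.faces}} (p : Δ.skeleton.Walk a b),
      (∀ v ∈ p.support, v.1 ≠ x) →
      ∀ (ha : ({a.1} : Finset W) ∈ (Δ.del x).faces)
        (hb : ({b.1} : Finset W) ∈ (Δ.del x).faces),
        (Δ.del x).skeleton.Reachable ⟨a.1, ha⟩ ⟨b.1, hb⟩ := by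
  intro a b p
  induction p with
  | nil => intro _ ha hb; exact SimpleGraph.Reachable.refl _
  | @cons a c b h q ih =>
    intro hsup ha hb
    have ha1 : a.1 ≠ x := hsup a (SimpleGraph.Walk.start_mem_support _)
    have hc1 : c.1 ≠ x := hsup c (by
      simp only [SimpleGraph.Walk.support_cons, List.mem_cons]
      exact Or.inr (SimpleGraph.Walk.start_mem_support q))
    have hc : ({c.1} : Finset W) ∈ (Δ.del x).faces := ⟨by simpa using hc1.symm, c.2⟩
    rw [SC.skeleton_adj] at h
    have hadj : (Δ.del x).skeleton.Adj ⟨a.1, ha⟩ ⟨c.1, hc⟩ := by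
      rw [SC.skeleton_adj]
      refine ⟨fun he => h.1 (Subtype.ext (Subtype.mk_eq_mk.mp he)), ?_, h.2⟩
      show x ∉ ({a.1, c.1} : Finset W)
      intro hx
      rcases Finset.mem_insert.mp hx with h' | h'
      · exact ha1 h'.symm
      · exact hc1 (Finset.mem_singleton.mp h').symm
    exact hadj.reachable.trans (ih (fun v hv => hsup v (by
      simp only [SimpleGraph.Walk.support_cons, List.mem_cons]; exact Or.inr hv)) hc hb)

end Aux
section Aux2

open Finset SimpleGraph

variable {W : Type} [Fintype W] [DecidableEq W]

/-- Existence of a good shedding vertex in a connected pure 1-dim complex with ≥ 3 vertices. -/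
lemma SC.exists_shed (Δ : SC W) (hpure : ∀ F : Finset W, Δ.facet F → F.card = 2)
    (hconn : Δ.Conn)
    (hcard : ∃ u v t : {v : W // ({v} : Finset W) ∈ Δ.faces}, u ≠ v ∧ u ≠ t ∧ v ≠ t) :
    ∃ x : {v : W // ({v} : Finset W) ∈ Δ.faces},
      (∀ w : {v : W // ({v} : Finset W) ∈ Δ.faces}, w ≠ x →
        ∃ u : W, u ≠ x.1 ∧ u ≠ w.1 ∧ ({w.1, u} : Finset W) ∈ Δ.faces) ∧
      (∀ a b : {v : W // ({v} : Finset W) ∈ Δ.faces}, a ≠ x → b ≠ x →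
        ∃ p : Δ.skeleton.Walk a b, ∀ v ∈ p.support, v ≠ x) := by
  classical
  set G := Δ.skeleton with hGdef
  have hG : G.Connected := hconn
  obtain ⟨u₀, v₀, t₀, huv, hut, hvt⟩ := hcard
  letI : DecidablePred (fun v : W => ({v} : Finset W) ∈ Δ.faces) :=
    fun _ => Classical.propDecidable _
  letI : Fintype {v : W // ({v} : Finset W) ∈ Δ.faces} := Subtype.fintype _
  set r := u₀ with hrdef
  obtain ⟨x, -, hmax⟩ := Finset.exists_max_image Finset.univ (fun v => G.dist r v)
    ⟨r, Finset.mem_univ r⟩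
  have hmax' : ∀ u, G.dist r u ≤ G.dist r x := fun u => hmax u (Finset.mem_univ u)
  have hrx : r ≠ x ∨ ∀ u, u = r := by
    by_cases h : ∀ u, u = r
    · exact Or.inr h
    · push_neg at h
      obtain ⟨u, hu⟩ := h
      left
      intro hre
      have h2 := hmax' u
      rw [← hre, SimpleGraph.dist_self, Nat.le_zero] at h2
      exact hu (hG.dist_eq_zero_iff.mp h2).symm
  rcases hrx with hrx | hall
  swap
  · exact absurd ((hall v₀).trans (hall t₀).symm) hvt
  -- geodesics from r avoid x
  have geo : ∀ w, w ≠ x → ∃ p : G.Walk r w, p.length = G.dist r w ∧ x ∉ p.support := by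
    intro w hw
    obtain ⟨p, hp⟩ := hG.exists_walk_length_eq_dist r w
    refine ⟨p, hp, fun hxs => ?_⟩
    have h1 : G.dist r x ≤ (p.takeUntil x hxs).length := SimpleGraph.dist_le _
    have h2 : (p.takeUntil x hxs).length + (p.dropUntil x hxs).length = p.length := by
      rw [← SimpleGraph.Walk.length_append, SimpleGraph.Walk.take_spec]
    have h3 : G.dist x w ≤ (p.dropUntil x hxs).length := SimpleGraph.dist_le _
    have h4 : 0 < G.dist x w := hG.pos_dist_of_ne (Ne.symm hw)
    have h5 : G.dist r w ≤ G.dist r x := hmax' w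
    omega
  refine ⟨x, ?_, ?_⟩
  · -- no vertex other than x loses all its edges
    intro w hw
    by_contra hcon
    push_neg at hcon
    obtain ⟨u, hu_ne, hedge⟩ := Δ.exists_nbr hpure w.2
    have hux : u = x.1 := by
      by_contra h
      exact hcon u h hu_ne hedge
    subst hux
    have key : ∀ v : {v : W // ({v} : Finset W) ∈ Δ.faces}, G.Adj w v → v = x := by
      intro v hv
      rw [hGdef, SC.skeleton_adj] at hv
      obtain ⟨hne, hf⟩ := hv
      have hvw : v.1 ≠ w.1 := fun h => hne (Subtype.ext h.symm)
      by_contra hvx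
      exact hcon v.1 (fun h => hvx (Subtype.ext h)) hvw hf
    have hAdjwx : G.Adj w x := by
      rw [hGdef, SC.skeleton_adj]
      exact ⟨hw, hedge⟩
    by_cases hrw : r = w
    · -- r = w : every vertex is r or x, contradicting three distinct vertices
      subst hrw
      have hdrx : G.dist r x = 1 := by
        refine le_antisymm ?_ (hG.pos_dist_of_ne hw)
        have := SimpleGraph.dist_le (SimpleGraph.Walk.cons hAdjwx SimpleGraph.Walk.nil)
        simpa using this
      have hall : ∀ u : {v : W // ({v} : Finset W) ∈ Δ.faces}, u = r ∨ u = x := by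
        intro u
        rcases eq_or_ne u r with h | h
        · exact Or.inl h
        · right
          have h1 : 0 < G.dist r u := hG.pos_dist_of_ne (Ne.symm h)
          have h2 : G.dist r u ≤ 1 := hdrx ▸ hmax' u
          have h3 : G.dist r u = 1 := by omega
          obtain ⟨p, hp⟩ := hG.exists_walk_length_eq_dist r u
          have hadj : G.Adj r u := p.adj_of_length_eq_one (hp.trans h3)
          exact key u hadj
      rcases hall v₀ with h2 | h2
      · exact huv h2.symm
      · rcases hall t₀ with h3 | h3
        · exact hut h3.symm
        · exact hvt (h2.trans h3.symm)
    · -- r ≠ w : shortcut contradiction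
      obtain ⟨p, hp⟩ := hG.exists_walk_length_eq_dist r w
      obtain ⟨c, hadj, q, heq⟩ := SimpleGraph.Walk.exists_eq_cons_of_ne
        (fun h => hrw h.symm) p.reverse
      have hcx : c = x := key c hadj
      have hlen : q.length + 1 = p.length := by
        have := congrArg SimpleGraph.Walk.length heq
        rw [SimpleGraph.Walk.length_reverse, SimpleGraph.Walk.length_cons] at this
        omega
      have hdq : G.dist x r ≤ q.length := by
        rw [← hcx]; exact SimpleGraph.dist_le q
      have hcomm : G.dist r x = G.dist x r := SimpleGraph.dist_comm
      have h5 : G.dist r w ≤ G.dist r x := hmax' w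
      have h6 : 0 < G.dist r w := hG.pos_dist_of_ne hrw
      omega
  · -- walks avoiding x between any two non-x vertices
    intro a b ha hb
    obtain ⟨p1, -, hp1⟩ := geo a ha
    obtain ⟨p2, -, hp2⟩ := geo b hb
    refine ⟨p1.reverse.append p2, fun v hv hvx => ?_⟩
    subst hvx
    rcases (SimpleGraph.Walk.mem_support_append_iff _ _).mp hv with h | h
    · rw [SimpleGraph.Walk.support_reverse, List.mem_reverse] at h
      exact hp1 h
    · exact hp2 h

end Aux2
section Main

open Finset SimpleGraph

variable {W : Type} [Fintype W] [DecidableEq W]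

/-- Vertex decomposable pure 1-dimensional complexes are connected. -/
lemma SC.vd_conn (Δ : SC W) (h : VD Δ) :
    (∀ F : Finset W, Δ.facet F → F.card = 2) → (∃ F ∈ Δ.faces, F.card = 2) → Δ.Conn := by
  induction h with
  | point Δ h =>
    intro _ hdim
    obtain ⟨F, hF, hFc⟩ := hdim
    rw [h, Set.mem_singleton_iff] at hF
    subst hF
    simp at hFc
  | simplex Δ F hfaces =>
    intro hpure _
    have hFmem : F ∈ Δ.faces := by rw [hfaces]; exact Set.mem_setOf_eq ▸ subset_rfl
    have hFfacet : Δ.facet F := ⟨hFmem, fun G hG hsub => subset_antisymm hsub (by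
      rwa [hfaces] at hG)⟩
    obtain ⟨a, b, hab, rfl⟩ := Finset.card_eq_two.mp (hpure F hFfacet)
    have hmem0 : ∀ v : W, ({v} : Finset W) ∈ Δ.faces → v ∈ ({a, b} : Finset W) := by
      intro v hv
      rw [hfaces, Set.mem_setOf_eq] at hv
      exact hv (Finset.mem_singleton_self _)
    have hmem : ∀ v : {v : W // ({v} : Finset W) ∈ Δ.faces}, v.1 ∈ ({a, b} : Finset W) :=
      fun v => hmem0 v.1 v.2
    show Δ.skeleton.Connected
    refine (SimpleGraph.connected_iff _).mpr ⟨fun u v => ?_, ⟨⟨a, Δ.down_closed hFmem (by simp)⟩⟩⟩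
    rcases eq_or_ne u v with rfl | huv
    · exact SimpleGraph.Reachable.refl u
    · refine SimpleGraph.Adj.reachable ?_
      rw [SC.skeleton_adj]
      refine ⟨huv, Δ.down_closed hFmem ?_⟩
      intro z hz
      rcases Finset.mem_insert.mp hz with rfl | hz
      · exact hmem u
      · rw [Finset.mem_singleton] at hz; subst hz; exact hmem v
  | shed Δ x hx hlink hdel hfac ihlink ihdel =>
    intro hpure hdim
    have hpure_del : ∀ F : Finset W, (Δ.del x).facet F → F.card = 2 :=
      fun F h => hpure F (hfac F h)
    have h0 : (∅ : Finset W) ∈ Δ.faces :=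
      Δ.down_closed hdim.choose_spec.1 (Finset.empty_subset _)
    have hdim_del : ∃ F ∈ (Δ.del x).faces, F.card = 2 := by
      obtain ⟨G, hG, -⟩ := (Δ.del x).exists_facet_supset
        (F := ∅) ⟨Finset.notMem_empty x, h0⟩
      exact ⟨G, hG.1, hpure_del G hG⟩
    have hconn_del := ihdel hpure_del hdim_del
    obtain ⟨y, hyx, hxy⟩ := Δ.exists_nbr hpure hx
    have hy : ({y} : Finset W) ∈ Δ.faces :=
      Δ.down_closed hxy (by simp)
    have hYdel : ({y} : Finset W) ∈ (Δ.del x).faces := ⟨by simpa using hyx.symm, hy⟩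
    set X : {v : W // ({v} : Finset W) ∈ Δ.faces} := ⟨x, hx⟩ with hXdef
    set Y : {v : W // ({v} : Finset W) ∈ Δ.faces} := ⟨y, hy⟩ with hYdef
    have hub : ∀ u : {v : W // ({v} : Finset W) ∈ Δ.faces}, Δ.skeleton.Reachable u Y := by
      intro u
      by_cases hu : u.1 = x
      · have : u = X := Subtype.ext hu
        subst this
        refine SimpleGraph.Adj.reachable ?_
        rw [SC.skeleton_adj]
        exact ⟨fun h => hyx (congrArg Subtype.val h).symm, hxy⟩
      · have hudel : ({u.1} : Finset W) ∈ (Δ.del x).faces := ⟨by simpa using (Ne.symm hu), u.2⟩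
        have hreach := hconn_del.preconnected ⟨u.1, hudel⟩ ⟨y, hYdel⟩
        have := hreach.map (Δ.delHom x)
        exact this
    show Δ.skeleton.Connected
    exact (SimpleGraph.connected_iff _).mpr
      ⟨fun u v => (hub u).trans (hub v).symm, ⟨X⟩⟩

/-- Connected pure 1-dimensional complexes are vertex decomposable. -/
lemma SC.conn_vd : ∀ n (Δ : SC W), Δ.vfin.card = n →
    (∀ F : Finset W, Δ.facet F → F.card = 2) → (∃ F ∈ Δ.faces, F.card = 2) →
    Δ.Conn → VD Δ := by
  intro n
  induction n using Nat.strong_induction_on with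
  | _ n ih =>
    intro Δ hn hpure hdim hconn
    have h2 : ∀ F ∈ Δ.faces, F.card ≤ 2 := fun F hF => Δ.card_le_two hpure hF
    obtain ⟨F₀, hF₀, hF₀c⟩ := hdim
    obtain ⟨a, b, hab, rfl⟩ := Finset.card_eq_two.mp hF₀c
    have ha : ({a} : Finset W) ∈ Δ.faces := Δ.down_closed hF₀ (by simp)
    have hb : ({b} : Finset W) ∈ Δ.faces := Δ.down_closed hF₀ (by simp)
    have h0 : (∅ : Finset W) ∈ Δ.faces := Δ.down_closed hF₀ (Finset.empty_subset _)
    by_cases hthird : ∃ c : W, ({c} : Finset W) ∈ Δ.faces ∧ c ≠ a ∧ c ≠ b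
    · -- at least three vertices: shed
      obtain ⟨c, hc, hca, hcb⟩ := hthird
      obtain ⟨x, hiso, hwalks⟩ := Δ.exists_shed hpure hconn
        ⟨⟨a, ha⟩, ⟨b, hb⟩, ⟨c, hc⟩,
          fun h => hab (congrArg Subtype.val h),
          fun h => hca (congrArg Subtype.val h).symm,
          fun h => hcb (congrArg Subtype.val h).symm⟩
      -- a vertex different from x
      have hother : ∃ w : W, ({w} : Finset W) ∈ Δ.faces ∧ w ≠ x.1 := by
        rcases eq_or_ne a x.1 with h | h
        · exact ⟨b, hb, fun hbx => hab (h.trans hbx.symm)⟩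
        · exact ⟨a, ha, h⟩
      -- facets of the deletion are facets
      have hfac : ∀ F : Finset W, (Δ.del x.1).facet F → Δ.facet F := by
        rintro F ⟨⟨hxF, hF⟩, hmax⟩
        have hFc := h2 F hF
        interval_cases hcF : F.card
        · exfalso
          obtain ⟨w, hw, hwx⟩ := hother
          have hwdel : ({w} : Finset W) ∈ (Δ.del x.1).faces := ⟨by simpa using hwx.symm, hw⟩
          have := hmax {w} hwdel (by simp [Finset.card_eq_zero.mp hcF])
          rw [Finset.card_eq_zero.mp hcF] at this
          exact Finset.singleton_ne_empty w this.symm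
        · exfalso
          obtain ⟨w₀, rfl⟩ := Finset.card_eq_one.mp hcF
          have hw₀x : w₀ ≠ x.1 := by
            intro h; exact hxF (h ▸ Finset.mem_singleton_self w₀)
          obtain ⟨u, hux, huw, he⟩ := hiso ⟨w₀, hF⟩ (fun h => hw₀x (congrArg Subtype.val h))
          have hedel : ({w₀, u} : Finset W) ∈ (Δ.del x.1).faces := by
            refine ⟨?_, he⟩
            intro hxm
            rcases Finset.mem_insert.mp hxm with h' | h'
            · exact hw₀x h'.symm
            · exact hux (Finset.mem_singleton.mp h').symm
          have := hmax _ hedel (by simp)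
          have : u ∈ ({w₀} : Finset W) := this ▸ by simp
          exact huw (Finset.mem_singleton.mp this)
        · exact Δ.facet_of_card_two h2 hF hcF
      have hpure_del : ∀ F : Finset W, (Δ.del x.1).facet F → F.card = 2 :=
        fun F h => hpure F (hfac F h)
      have hdim_del : ∃ F ∈ (Δ.del x.1).faces, F.card = 2 := by
        obtain ⟨G, hG, -⟩ := (Δ.del x.1).exists_facet_supset
          (F := ∅) ⟨Finset.notMem_empty _, h0⟩
        exact ⟨G, hG.1, hpure_del G hG⟩
      have hconn_del : (Δ.del x.1).Conn := by
        obtain ⟨w, hw, hwx⟩ := hother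
        show (Δ.del x.1).skeleton.Connected
        refine (SimpleGraph.connected_iff _).mpr ⟨?_, ⟨⟨w, by simpa using hwx.symm, hw⟩⟩⟩
        intro p q
        have hp1 : p.1 ≠ x.1 := by simpa using (Ne.symm (by simpa using p.2.1))
        have hq1 : q.1 ≠ x.1 := by simpa using (Ne.symm (by simpa using q.2.1))
        obtain ⟨pw, hpw⟩ := hwalks ⟨p.1, p.2.2⟩ ⟨q.1, q.2.2⟩
          (fun h => hp1 (congrArg Subtype.val h)) (fun h => hq1 (congrArg Subtype.val h))
        have := Δ.reach_del x.1 pw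
          (fun v hv => fun hvx => hpw v hv (Subtype.ext hvx)) p.2 q.2
        exact this
      have hlt : (Δ.del x.1).vfin.card < n := by
        have hvd : (Δ.del x.1).vfin = Δ.vfin.erase x.1 := by
          ext u
          simp only [SC.mem_vfin, Finset.mem_erase, SC.del, Set.mem_setOf_eq,
            Finset.mem_singleton]
          tauto
        have hvmem : x.1 ∈ Δ.vfin := Δ.mem_vfin.mpr x.2
        rw [hvd, Finset.card_erase_of_mem hvmem]
        have : 0 < Δ.vfin.card := Finset.card_pos.mpr ⟨x.1, hvmem⟩
        omega
      refine VD.shed Δ x.1 x.2 ?_ ?_ hfac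
      · -- link is zero-dimensional and nonempty
        refine SC.vd_of_zero_dim _ _ rfl ?_ ?_
        · rintro F ⟨hxF, hF⟩
          have := h2 _ hF
          rw [Finset.card_insert_of_notMem hxF] at this
          omega
        · exact ⟨∅, Finset.notMem_empty _, by simpa using x.2⟩
      · exact ih _ hlt _ rfl hpure_del hdim_del hconn_del
    · -- exactly the two vertices a, b: simplex
      refine VD.simplex Δ {a, b} ?_
      ext F
      simp only [Set.mem_setOf_eq]
      constructor
      · intro hF
        intro v hv
        have hv' : ({v} : Finset W) ∈ Δ.faces :=
          Δ.down_closed hF (Finset.singleton_subset_iff.mpr hv)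
        by_contra hvm
        refine hthird ⟨v, hv', ?_, ?_⟩
        · intro h; exact hvm (by simp [h])
        · intro h; exact hvm (by simp [h])
      · intro hF
        exact Δ.down_closed hF₀ hF

end Main

theorem one_dim_vd_iff_connected {W : Type} [Fintype W] [DecidableEq W] (Δ : SC W)
    (hpure : ∀ F : Finset W, Δ.facet F → F.card = 2)
    (hdim : ∃ F ∈ Δ.faces, F.card = 2) :
    VD Δ ↔ Δ.Conn :=
  ⟨fun h => Δ.vd_conn h hpure hdim, fun h => SC.conn_vd _ Δ rfl hpure hdim h⟩
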